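/- Let (A,E_A), (B,E_B), (C,E_C) be filtered C*-probability spaces, let M : ℝ≥0 → L²(E_A) and N : ℝ≥0 → L²(E_B) be L²-martingales, and let Λ : ℝ≥0 → B₂(L²(E_A) × L²(E_B); L¹(E_C)) be an arbitrary bilinear process. Then for any t ≥ 0 and any partition Π of ℝ≥0, sup_{0≤s≤t} ‖Σ_{u∈Π} Λ(u_-)[M(u∧s)-M(u_-∧s), N(u∧s)-N(u_-∧s)]‖₁ ≤ (sup_{0≤s≤t} ‖Λ(s)‖_{2,2;1}) · ‖M(t)-M(0)‖₂ · ‖N(t)-N(0)‖₂. -/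

import Mathlib

open scoped NNReal ENNReal

set_option synthInstance.maxHeartbeats 1000000
set_option maxHeartbeats 1000000

section Helpers

variable {H : Type*} [NormedAddCommGroup H] [InnerProductSpace ℂ H]

private lemma mart_mem (V : ℝ≥0 → Submodule ℂ H) [∀ x, CompleteSpace (V x)] (M : ℝ≥0 → H)
    (hM : ∀ s t : ℝ≥0, s ≤ t → (Submodule.orthogonalProjectionOnto (V s) (M t) : H) = M s)
    (x : ℝ≥0) : M x ∈ V x := by
  rw [← hM x x le_rfl]; exact Submodule.coe_mem _

private lemma mart_proj_sub (V : ℝ≥0 → Submodule ℂ H) [∀ x, CompleteSpace (V x)] (M : ℝ≥0 → H)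
    (hM : ∀ s t : ℝ≥0, s ≤ t → (Submodule.orthogonalProjectionOnto (V s) (M t) : H) = M s)
    {c a b : ℝ≥0} (hca : c ≤ a) (hab : a ≤ b) :
    (Submodule.orthogonalProjectionOnto (V c) (M b - M a) : H) = 0 := by
  rw [map_sub, Submodule.coe_sub, hM c b (hca.trans hab), hM c a hca, sub_self]

private lemma mart_inner_zero (V : ℝ≥0 → Submodule ℂ H) (hV : Monotone V) [∀ x, CompleteSpace (V x)] (M : ℝ≥0 → H)
    (hM : ∀ s t : ℝ≥0, s ≤ t → (Submodule.orthogonalProjectionOnto (V s) (M t) : H) = M s)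
    {a b c d : ℝ≥0} (hab : a ≤ b) (hbc : b ≤ c) (hcd : c ≤ d) :
    (inner ℂ (M b - M a) (M d - M c) : ℂ) = 0 := by
  have hmem : M b - M a ∈ V b :=
    sub_mem (mart_mem V M hM b) (hV hab (mart_mem V M hM a))
  have h1 : (Submodule.orthogonalProjectionOnto (V b) (M b - M a) : H) = M b - M a :=
    Submodule.starProjection_eq_self_iff.mpr hmem
  calc (inner ℂ (M b - M a) (M d - M c) : ℂ)
      = inner ℂ ((Submodule.orthogonalProjectionOnto (V b) (M b - M a) : H)) (M d - M c) := by rw [h1]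
    _ = inner ℂ (M b - M a) ((Submodule.orthogonalProjectionOnto (V b) (M d - M c) : H)) :=
        Submodule.inner_starProjection_left_eq_right _ _ _
    _ = 0 := by rw [mart_proj_sub V M hM hbc hcd, inner_zero_right]

private lemma mart_norm_le (V : ℝ≥0 → Submodule ℂ H) (hV : Monotone V) [∀ x, CompleteSpace (V x)] (M : ℝ≥0 → H)
    (hM : ∀ s t : ℝ≥0, s ≤ t → (Submodule.orthogonalProjectionOnto (V s) (M t) : H) = M s)
    {a t : ℝ≥0} (hat : a ≤ t) : ‖M a - M 0‖ ≤ ‖M t - M 0‖ := by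
  have h0 : (Submodule.orthogonalProjectionOnto (V a) (M t - M 0) : H) = M a - M 0 := by
    rw [map_sub, Submodule.coe_sub, hM a t hat,
      show (Submodule.orthogonalProjectionOnto (V a) (M 0) : H) = M 0 from
        Submodule.starProjection_eq_self_iff.mpr (hV (zero_le : 0 ≤ a) (mart_mem V M hM 0))]
  calc ‖M a - M 0‖ = ‖(Submodule.orthogonalProjectionOnto (V a) (M t - M 0) : H)‖ := by rw [h0]
    _ ≤ ‖Submodule.orthogonalProjectionOnto (V a)‖ * ‖M t - M 0‖ :=
        ((Submodule.orthogonalProjectionOnto (V a)).le_opNorm _)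
    _ ≤ 1 * ‖M t - M 0‖ := by
        gcongr; exact Submodule.orthogonalProjectionOnto_norm_le _
    _ = ‖M t - M 0‖ := one_mul _

private lemma orth_sum_norm_sq {n : ℕ} (v : Fin n → H)
    (h : ∀ i j : Fin n, i ≠ j → (inner ℂ (v i) (v j) : ℂ) = 0) :
    ∑ i, ‖v i‖ ^ 2 = ‖∑ i, v i‖ ^ 2 := by
  have h1 : (inner ℂ (∑ i, v i) (∑ i, v i) : ℂ) = ∑ i, inner ℂ (v i) (v i) := by
    rw [sum_inner]
    refine Finset.sum_congr rfl fun i _ => ?_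
    rw [inner_sum, Finset.sum_eq_single i (fun j _ hj => h i j (Ne.symm hj)) (by simp)]
  calc ∑ i, ‖v i‖ ^ 2 = ∑ i, RCLike.re (inner ℂ (v i) (v i) : ℂ) := by
        simp only [inner_self_eq_norm_sq]
    _ = RCLike.re (∑ i, (inner ℂ (v i) (v i) : ℂ)) := (map_sum _ _ _).symm
    _ = RCLike.re (inner ℂ (∑ i, v i) (∑ i, v i) : ℂ) := by rw [h1]
    _ = ‖∑ i, v i‖ ^ 2 := inner_self_eq_norm_sq _

/-- Telescoping: `∑ i : Fin n, (f i.succ - f i.castSucc) = f (Fin.last n) - f 0`. -/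
private lemma fin_telescope {n : ℕ} (f : Fin (n + 1) → H) :
    ∑ i : Fin n, (f i.succ - f i.castSucc) = f (Fin.last n) - f 0 := by
  classical
  set g : ℕ → H := fun k => f ⟨min k n, Nat.lt_succ_of_le (min_le_right _ _)⟩ with hg
  have h1 : ∑ i : Fin n, (f i.succ - f i.castSucc)
      = ∑ i ∈ Finset.range n, (g (i + 1) - g i) := by
    rw [← Fin.sum_univ_eq_sum_range]
    refine Finset.sum_congr rfl fun i _ => ?_
    have e1 : g (↑i + 1) = f i.succ := by
      simp only [hg]; congr 1; ext
      simp [Nat.min_eq_left (Nat.succ_le_of_lt i.isLt)]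
    have e2 : g ↑i = f i.castSucc := by
      simp only [hg]; congr 1; ext
      simp [Nat.min_eq_left i.isLt.le]
    rw [e1, e2]
  have h2 : g n = f (Fin.last n) := by
    simp only [hg]; congr 1; ext; simp [Fin.last]
  have h3 : g 0 = f 0 := by
    simp only [hg]; congr 1
  rw [h1, Finset.sum_range_sub, h2, h3]

end Helpers

/-- **A priori `L¹`-bound for quadratic Riemann–Stieltjes sums of two `L²`-martingales**
(Lemma `lem.cheapbd`). -/
theorem quadratic_RS_sum_L1_bound
    {HA HB EC : Type*} [NormedAddCommGroup HA] [InnerProductSpace ℂ HA]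
    [NormedAddCommGroup HB] [InnerProductSpace ℂ HB]
    [NormedAddCommGroup EC] [NormedSpace ℝ EC]
    (VA : ℝ≥0 → Submodule ℂ HA) (hVA : Monotone VA) [∀ u, CompleteSpace (VA u)]
    (VB : ℝ≥0 → Submodule ℂ HB) (hVB : Monotone VB) [∀ u, CompleteSpace (VB u)]
    (M : ℝ≥0 → HA) (N : ℝ≥0 → HB)
    (hM : ∀ s t : ℝ≥0, s ≤ t → (Submodule.orthogonalProjectionOnto (VA s) (M t) : HA) = M s)
    (hN : ∀ s t : ℝ≥0, s ≤ t → (Submodule.orthogonalProjectionOnto (VB s) (N t) : HB) = N s)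
    (Λ : ℝ≥0 → (HA →L[ℝ] HB →L[ℝ] EC))
    (t : ℝ≥0) (n : ℕ) (u : Fin (n + 1) → ℝ≥0) (hu : Monotone u) (hu0 : u 0 = 0)
    (s : ℝ≥0) (hs : s ≤ t) :
    ENNReal.ofReal
        ‖∑ i : Fin n,
            Λ (u i.castSucc) (M (u i.succ ⊓ s) - M (u i.castSucc ⊓ s))
              (N (u i.succ ⊓ s) - N (u i.castSucc ⊓ s))‖ ≤
      (⨆ r ∈ Set.Icc (0 : ℝ≥0) t, ENNReal.ofReal ‖Λ r‖) *
        ENNReal.ofReal ‖M t - M 0‖ * ENNReal.ofReal ‖N t - N 0‖ := by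
  classical
  set S : ℝ≥0∞ := ⨆ r ∈ Set.Icc (0 : ℝ≥0) t, ENNReal.ofReal ‖Λ r‖ with hS
  set DM : Fin n → HA := fun i => M (u i.succ ⊓ s) - M (u i.castSucc ⊓ s) with hDM
  set DN : Fin n → HB := fun i => N (u i.succ ⊓ s) - N (u i.castSucc ⊓ s) with hDN
  -- orthogonality of increments and the ℓ² bounds
  have horthM : ∀ i j : Fin n, i ≠ j → (inner ℂ (DM i) (DM j) : ℂ) = 0 := by
    intro i j hij
    rcases lt_or_gt_of_ne hij with h | h
    · have h1 : u i.succ ≤ u j.castSucc := hu (by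
        simp only [Fin.le_def, Fin.val_succ, Fin.coe_castSucc]; exact h)
      exact mart_inner_zero VA hVA M hM
        (inf_le_inf_right s (hu i.castSucc_le_succ))
        (inf_le_inf_right s h1)
        (inf_le_inf_right s (hu j.castSucc_le_succ))
    · rw [inner_eq_zero_symm]
      have h1 : u j.succ ≤ u i.castSucc := hu (by
        simp only [Fin.le_def, Fin.val_succ, Fin.coe_castSucc]; exact h)
      exact mart_inner_zero VA hVA M hM
        (inf_le_inf_right s (hu j.castSucc_le_succ))
        (inf_le_inf_right s h1)
        (inf_le_inf_right s (hu i.castSucc_le_succ))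
  have horthN : ∀ i j : Fin n, i ≠ j → (inner ℂ (DN i) (DN j) : ℂ) = 0 := by
    intro i j hij
    rcases lt_or_gt_of_ne hij with h | h
    · have h1 : u i.succ ≤ u j.castSucc := hu (by
        simp only [Fin.le_def, Fin.val_succ, Fin.coe_castSucc]; exact h)
      exact mart_inner_zero VB hVB N hN
        (inf_le_inf_right s (hu i.castSucc_le_succ))
        (inf_le_inf_right s h1)
        (inf_le_inf_right s (hu j.castSucc_le_succ))
    · rw [inner_eq_zero_symm]
      have h1 : u j.succ ≤ u i.castSucc := hu (by
        simp only [Fin.le_def, Fin.val_succ, Fin.coe_castSucc]; exact h)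
      exact mart_inner_zero VB hVB N hN
        (inf_le_inf_right s (hu j.castSucc_le_succ))
        (inf_le_inf_right s h1)
        (inf_le_inf_right s (hu i.castSucc_le_succ))
  -- the ℓ² sums
  have hsumM : ∑ i, ‖DM i‖ ^ 2 ≤ ‖M t - M 0‖ ^ 2 := by
    rw [orth_sum_norm_sq DM horthM]
    have htel : ∑ i, DM i = M (u (Fin.last n) ⊓ s) - M 0 := by
      have h := fin_telescope (fun j : Fin (n + 1) => M (u j ⊓ s))
      simp only [hu0] at h
      rw [show (0 : ℝ≥0) ⊓ s = 0 from inf_eq_left.mpr zero_le] at h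
      simp only [hDM]
      exact h
    rw [htel]
    have := mart_norm_le VA hVA M hM (a := u (Fin.last n) ⊓ s) (inf_le_right.trans hs)
    exact pow_le_pow_left₀ (norm_nonneg _) this 2
  have hsumN : ∑ i, ‖DN i‖ ^ 2 ≤ ‖N t - N 0‖ ^ 2 := by
    rw [orth_sum_norm_sq DN horthN]
    have htel : ∑ i, DN i = N (u (Fin.last n) ⊓ s) - N 0 := by
      have h := fin_telescope (fun j : Fin (n + 1) => N (u j ⊓ s))
      simp only [hu0] at h
      rw [show (0 : ℝ≥0) ⊓ s = 0 from inf_eq_left.mpr zero_le] at h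
      simp only [hDN]
      exact h
    rw [htel]
    have := mart_norm_le VB hVB N hN (a := u (Fin.last n) ⊓ s) (inf_le_right.trans hs)
    exact pow_le_pow_left₀ (norm_nonneg _) this 2
  -- Cauchy–Schwarz
  have hCS : ∑ i, ‖DM i‖ * ‖DN i‖ ≤ ‖M t - M 0‖ * ‖N t - N 0‖ := by
    calc ∑ i, ‖DM i‖ * ‖DN i‖
        ≤ Real.sqrt (∑ i, ‖DM i‖ ^ 2) * Real.sqrt (∑ i, ‖DN i‖ ^ 2) :=
          Real.sum_mul_le_sqrt_mul_sqrt _ _ _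
      _ ≤ ‖M t - M 0‖ * ‖N t - N 0‖ := by
          apply mul_le_mul
          · calc Real.sqrt (∑ i, ‖DM i‖ ^ 2) ≤ Real.sqrt (‖M t - M 0‖ ^ 2) :=
                Real.sqrt_le_sqrt hsumM
              _ = ‖M t - M 0‖ := Real.sqrt_sq (norm_nonneg _)
          · calc Real.sqrt (∑ i, ‖DN i‖ ^ 2) ≤ Real.sqrt (‖N t - N 0‖ ^ 2) :=
                Real.sqrt_le_sqrt hsumN
              _ = ‖N t - N 0‖ := Real.sqrt_sq (norm_nonneg _)
          · exact Real.sqrt_nonneg _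
          · exact norm_nonneg _
  -- main chain in ℝ≥0∞
  calc ENNReal.ofReal ‖∑ i : Fin n, Λ (u i.castSucc) (DM i) (DN i)‖
      ≤ ENNReal.ofReal (∑ i : Fin n, ‖Λ (u i.castSucc) (DM i) (DN i)‖) :=
        ENNReal.ofReal_le_ofReal (norm_sum_le _ _)
    _ = ∑ i : Fin n, ENNReal.ofReal ‖Λ (u i.castSucc) (DM i) (DN i)‖ :=
        ENNReal.ofReal_sum_of_nonneg (fun i _ => norm_nonneg _)
    _ ≤ ∑ i : Fin n, S * ENNReal.ofReal (‖DM i‖ * ‖DN i‖) := by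
        refine Finset.sum_le_sum fun i _ => ?_
        by_cases hi : u i.castSucc ≤ t
        · have hle : ENNReal.ofReal ‖Λ (u i.castSucc)‖ ≤ S :=
            le_iSup₂_of_le (u i.castSucc) ⟨zero_le, hi⟩ le_rfl
          calc ENNReal.ofReal ‖Λ (u i.castSucc) (DM i) (DN i)‖
              ≤ ENNReal.ofReal (‖Λ (u i.castSucc)‖ * (‖DM i‖ * ‖DN i‖)) := by
                apply ENNReal.ofReal_le_ofReal
                rw [← mul_assoc]
                exact (Λ (u i.castSucc)).le_opNorm₂ _ _
            _ = ENNReal.ofReal ‖Λ (u i.castSucc)‖ * ENNReal.ofReal (‖DM i‖ * ‖DN i‖) :=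
                ENNReal.ofReal_mul ((Λ (u i.castSucc)).opNorm_nonneg)
            _ ≤ S * ENNReal.ofReal (‖DM i‖ * ‖DN i‖) := by gcongr
        · have hst : s < u i.castSucc := lt_of_le_of_lt hs (lt_of_not_ge hi)
          have h1 : u i.castSucc ⊓ s = s := inf_eq_right.mpr hst.le
          have h2 : u i.succ ⊓ s = s := inf_eq_right.mpr (hst.le.trans (hu i.castSucc_le_succ))
          have : DM i = 0 := by rw [hDM]; simp [h1, h2]
          simp [this]
    _ = S * ENNReal.ofReal (∑ i, ‖DM i‖ * ‖DN i‖) := by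
        rw [← Finset.mul_sum, ENNReal.ofReal_sum_of_nonneg
          (fun i _ => mul_nonneg (norm_nonneg _) (norm_nonneg _))]
    _ ≤ S * ENNReal.ofReal (‖M t - M 0‖ * ‖N t - N 0‖) := by
        exact mul_le_mul_right (ENNReal.ofReal_le_ofReal hCS) S
    _ = S * ENNReal.ofReal ‖M t - M 0‖ * ENNReal.ofReal ‖N t - N 0‖ := by
        rw [ENNReal.ofReal_mul (norm_nonneg _), mul_assoc]
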